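/- arXiv:1109.0787 — 5 statements merged into one kernel-verified Lean document; each statement's English description precedes it below -/
import Mathlib

section
/- Let (G,R) be a graph with roots, M a matroid on R with rank function r_M, and c an integer. Suppose (C1) holds (R_v is independent in M for each v∈V) and c ≥ r_M(R). Then the function f_{M,c}:2^E→ℤ defined by f_{M,c}(F)=c(|V(F)|−1)−(|R_F|−r_M(R_F)) is monotone (f_{M,c}(F)≤f_{M,c}(F') whenever F⊆F'⊆E) and submodular (f_{M,c}(X)+f_{M,c}(Y) ≥ f_{M,c}(X∪Y)+f_{M,c}(X∩Y) for all X,Y⊆E). -/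
open Finset
open scoped Classical

/-- Vertex set `V(F)` of an edge subset `F`: vertices incident to an edge of `F`. -/
noncomputable def incVerts {V E : Type*} [Fintype V] (ends : E → Sym2 V) (F : Finset E) :
    Finset V :=
  Finset.univ.filter (fun v => ∃ e ∈ F, v ∈ ends e)

/-- The multiset `R_v` of roots located at a vertex `v` (as a set of root indices). -/
noncomputable def rootsAt {V ι : Type*} [Fintype ι] (root : ι → V) (v : V) : Finset ι :=
  Finset.univ.filter (fun i => root i = v)

/-- The multiset `R_F` of roots located at vertices of `V(F)`. -/
noncomputable def rootsOf {V E ι : Type*} [Fintype V] [Fintype ι] (ends : E → Sym2 V)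
    (root : ι → V) (F : Finset E) : Finset ι :=
  Finset.univ.filter (fun i => root i ∈ incVerts ends F)

/-- The multiset `R_X` of roots located at vertices of `X ⊆ V`. -/
noncomputable def rootsIn {V ι : Type*} [Fintype ι] (root : ι → V) (X : Finset V) : Finset ι :=
  Finset.univ.filter (fun i => root i ∈ X)

/-- A matroid on a finite ground type `ι`, given by its rank function. -/
structure FinMatroid (ι : Type*) [Fintype ι] where
  rk : Finset ι → ℕ
  rk_le_card : ∀ X : Finset ι, rk X ≤ X.card
  rk_mono : ∀ ⦃X Y : Finset ι⦄, X ⊆ Y → rk X ≤ rk Y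
  rk_submodular : ∀ X Y : Finset ι, rk (X ∪ Y) + rk (X ∩ Y) ≤ rk X + rk Y

/-- Independence in a matroid given by a rank function. -/
def FinMatroid.Indep {ι : Type*} [Fintype ι] (M : FinMatroid ι) (X : Finset ι) : Prop :=
  M.rk X = X.card

/-- `X` is a base of the matroid with rank function `ρ`: independent and spanning. -/
def IsBaseOf {ι : Type*} [Fintype ι] (ρ : Finset ι → ℕ) (X : Finset ι) : Prop :=
  ρ X = X.card ∧ ρ X = ρ Finset.univ

/-- The closure (span) `sp(X)` of `X` in the matroid with rank function `ρ`. -/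
noncomputable def spOf {ι : Type*} [Fintype ι] (ρ : Finset ι → ℕ) (X : Finset ι) : Finset ι :=
  Finset.univ.filter (fun y => ρ (insert y X) = ρ X)

/-- Two vertices are adjacent via an edge of `F`. -/
def adjIn {V E : Type*} (ends : E → Sym2 V) (F : Finset E) (u v : V) : Prop :=
  ∃ e ∈ F, ends e = s(u, v)

/-- The edge set `F` is connected: all its incident vertices are mutually reachable in `F`. -/
def connIn {V E : Type*} [Fintype V] (ends : E → Sym2 V) (F : Finset E) : Prop :=
  ∀ u ∈ incVerts ends F, ∀ v ∈ incVerts ends F, Relation.ReflTransGen (adjIn ends F) u v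

/-- `(T, r)` is a rooted tree: `T` is empty, or `T` is connected and acyclic with `r ∈ V(T)`.
(A connected edge set `T` is acyclic iff `|T| + 1 = |V(T)|`.) -/
def IsRootedTree {V E : Type*} [Fintype V] (ends : E → Sym2 V) (T : Finset E) (r : V) : Prop :=
  T = ∅ ∨ (connIn ends T ∧ T.card + 1 = (incVerts ends T).card ∧ r ∈ incVerts ends T)

/-- The vertex set `V(T, r) = V(T) ∪ {r}` spanned by the rooted tree `(T, r)`. -/
noncomputable def treeVerts {V E : Type*} [Fintype V] (ends : E → Sym2 V) (T : Finset E)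
    (r : V) : Finset V :=
  insert r (incVerts ends T)

/-- `T` is a spanning tree on the vertex set `X`. -/
def IsSpanningTreeOn {V E : Type*} [Fintype V] (ends : E → Sym2 V) (X : Finset V)
    (T : Finset E) : Prop :=
  incVerts ends T ⊆ X ∧ (∀ u ∈ X, ∀ v ∈ X, Relation.ReflTransGen (adjIn ends T) u v) ∧
    T.card + 1 = X.card

/-- The family `T` is a basic rooted-tree decomposition of the subgraph with vertex set `Vs`,
edge set `Es` and roots indexed by `Rs`, with respect to the matroid (on `Rs`) whose rank
function is `ρ`: the `T i` are edge-disjoint rooted trees partitioning `Es`, and every vertex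
of `Vs` is spanned by a family of rooted trees whose root multiset is a base. -/
def IsBasicDecompFam {V E ι : Type*} [Fintype V] [Fintype ι] (ends : E → Sym2 V) (root : ι → V)
    (ρ : Finset ι → ℕ) (Vs : Finset V) (Rs : Finset ι) (Es : Finset E)
    (T : ι → Finset E) : Prop :=
  (∀ i ∈ Rs, T i ⊆ Es ∧ IsRootedTree ends (T i) (root i)) ∧
  (∀ i ∉ Rs, T i = ∅) ∧
  (∀ i j, i ≠ j → Disjoint (T i) (T j)) ∧
  (∀ e ∈ Es, ∃ i ∈ Rs, e ∈ T i) ∧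
  (∀ v ∈ Vs, IsBaseOf ρ (Rs.filter (fun i => v ∈ treeVerts ends (T i) (root i))))

/-- `(G, R)` admits a basic rooted-tree decomposition. -/
def HasBasicDecomp {V E ι : Type*} [Fintype V] [Fintype ι] (ends : E → Sym2 V) (root : ι → V)
    (ρ : Finset ι → ℕ) (Vs : Finset V) (Rs : Finset ι) (Es : Finset E) : Prop :=
  ∃ T : ι → Finset E, IsBasicDecompFam ends root ρ Vs Rs Es T

/-- Condition (C1): the root multiset at each vertex is independent. -/
def CondC1 {V ι : Type*} [Fintype ι] (root : ι → V) (ρ : Finset ι → ℕ) : Prop :=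
  ∀ v : V, ρ (rootsAt root v) = (rootsAt root v).card

/-- Condition (C2): `|F| + |R_F| ≤ k|V(F)| - k + ρ(R_F)` for every nonempty `F ⊆ E`. -/
def CondC2 {V E ι : Type*} [Fintype V] [Fintype E] [Fintype ι] (ends : E → Sym2 V)
    (root : ι → V) (ρ : Finset ι → ℕ) (k : ℕ) : Prop :=
  ∀ F : Finset E, F.Nonempty →
    F.card + (rootsOf ends root F).card + k ≤
      k * (incVerts ends F).card + ρ (rootsOf ends root F)

/-- Condition (C3): `|E| + |R| = k|V|`. -/
def CondC3 (V E ι : Type*) [Fintype V] [Fintype E] [Fintype ι] (k : ℕ) : Prop :=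
  Fintype.card E + Fintype.card ι = k * Fintype.card V

/-- The function `f_{M,c}(F) = c(|V(F)| - 1) - (|R_F| - r_M(R_F))`, as an integer. -/
noncomputable def fcount {V E ι : Type*} [Fintype V] [Fintype E] [Fintype ι] (ends : E → Sym2 V)
    (root : ι → V) (ρ : Finset ι → ℕ) (c : ℤ) (F : Finset E) : ℤ :=
  c * ((incVerts ends F).card - 1) -
    (((rootsOf ends root F).card : ℤ) - (ρ (rootsOf ends root F) : ℤ))

set_option linter.unusedSectionVars false

section Aux

variable {V E ι : Type*} [Fintype V] [Fintype E] [Fintype ι]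

lemma incVerts_union (ends : E → Sym2 V) (X Y : Finset E) :
    incVerts ends (X ∪ Y) = incVerts ends X ∪ incVerts ends Y := by
  ext v; simp [incVerts, or_and_right, exists_or]

lemma incVerts_mono (ends : E → Sym2 V) {X Y : Finset E} (h : X ⊆ Y) :
    incVerts ends X ⊆ incVerts ends Y := by
  intro v hv
  simp only [incVerts, mem_filter, mem_univ, true_and] at hv ⊢
  obtain ⟨e, he, hve⟩ := hv
  exact ⟨e, h he, hve⟩

lemma rootsOf_eq (ends : E → Sym2 V) (root : ι → V) (F : Finset E) :
    rootsOf ends root F = rootsIn root (incVerts ends F) := rfl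

lemma rootsIn_union (root : ι → V) (X Y : Finset V) :
    rootsIn root (X ∪ Y) = rootsIn root X ∪ rootsIn root Y := by
  ext i; simp [rootsIn, or_and_right]

lemma rootsIn_inter (root : ι → V) (X Y : Finset V) :
    rootsIn root (X ∩ Y) = rootsIn root X ∩ rootsIn root Y := by
  ext i; simp [rootsIn]

lemma rootsIn_insert (root : ι → V) (v : V) (W : Finset V) :
    rootsIn root (insert v W) = rootsIn root W ∪ rootsAt root v := by
  ext i; simp [rootsIn, rootsAt]; tauto

lemma nullity_step (M : FinMatroid ι) (root : ι → V) (c : ℤ)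
    (hC1 : CondC1 root M.rk) (hc : (M.rk Finset.univ : ℤ) ≤ c)
    (S : Finset ι) (v : V) :
    ((S ∪ rootsAt root v).card : ℤ) - M.rk (S ∪ rootsAt root v) ≤
      ((S.card : ℤ) - M.rk S) + c := by
  have hcard : ((S ∪ rootsAt root v).card : ℤ) + ((S ∩ rootsAt root v).card : ℤ)
      = S.card + (rootsAt root v).card := by
    exact_mod_cast congrArg (Nat.cast : ℕ → ℤ)
      (Finset.card_union_add_card_inter S (rootsAt root v))
  have hrk1 : (rootsAt root v).card ≤ M.rk (S ∪ rootsAt root v) := by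
    rw [← hC1 v]
    exact M.rk_mono (Finset.subset_union_right)
  have hrk2 : M.rk S ≤ M.rk Finset.univ := M.rk_mono (Finset.subset_univ _)
  have h3 : (0 : ℤ) ≤ ((S ∩ rootsAt root v).card : ℤ) := by positivity
  have hrk1' : ((rootsAt root v).card : ℤ) ≤ M.rk (S ∪ rootsAt root v) := by
    exact_mod_cast hrk1
  have hrk2' : (M.rk S : ℤ) ≤ M.rk Finset.univ := by exact_mod_cast hrk2
  linarith

lemma nullity_key (M : FinMatroid ι) (root : ι → V) (c : ℤ)
    (hC1 : CondC1 root M.rk) (hc : (M.rk Finset.univ : ℤ) ≤ c)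
    (W : Finset V) (S : Finset ι) :
    ((S ∪ rootsIn root W).card : ℤ) - M.rk (S ∪ rootsIn root W) ≤
      ((S.card : ℤ) - M.rk S) + c * W.card := by
  induction W using Finset.induction_on generalizing S with
  | empty =>
      simp only [rootsIn, Finset.notMem_empty, Finset.filter_false, Finset.union_empty,
        Finset.card_empty, Nat.cast_zero, mul_zero, add_zero]
      simp [rootsIn]
  | insert v W hv ih =>
      rw [rootsIn_insert, ← Finset.union_assoc]
      have h1 := nullity_step M root c hC1 hc (S ∪ rootsIn root W) v
      have h2 := ih S
      have hcard : ((insert v W).card : ℤ) = W.card + 1 := by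
        rw [Finset.card_insert_of_notMem hv]; push_cast; ring
      rw [hcard]
      linarith [h1, h2]

end Aux

/-- **Lemma (monotonicity and submodularity of `f_{M,c}`).**
Let `(G, R)` be a graph with roots, `M` a matroid on `R`, and `c` an integer.
If (C1) holds and `c ≥ r_M(R)`, then `f_{M,c}(F) = c(|V(F)| - 1) - (|R_F| - r_M(R_F))` is
monotone and submodular. -/
theorem fcount_monotone_submodular {V E ι : Type*} [Fintype V] [Fintype E] [Fintype ι]
    (ends : E → Sym2 V) (root : ι → V) (M : FinMatroid ι) (c : ℤ)
    (hC1 : CondC1 root M.rk) (hc : (M.rk Finset.univ : ℤ) ≤ c) :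
    (∀ F F' : Finset E, F ⊆ F' →
        fcount ends root M.rk c F ≤ fcount ends root M.rk c F') ∧
      (∀ X Y : Finset E,
        fcount ends root M.rk c (X ∪ Y) + fcount ends root M.rk c (X ∩ Y) ≤
          fcount ends root M.rk c X + fcount ends root M.rk c Y) := by
  constructor
  · intro F F' hFF
    classical
    set W : Finset V := incVerts ends F' \ incVerts ends F with hW
    have hsub : incVerts ends F ⊆ incVerts ends F' := incVerts_mono ends hFF
    have hVF' : incVerts ends F' = incVerts ends F ∪ W := by
      rw [hW, Finset.union_sdiff_of_subset hsub]
    have hR' : rootsOf ends root F' = rootsOf ends root F ∪ rootsIn root W := by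
      rw [rootsOf_eq, rootsOf_eq, hVF', rootsIn_union]
    have hkey := nullity_key M root c hC1 hc W (rootsOf ends root F)
    rw [← hR'] at hkey
    have hcard : ((incVerts ends F').card : ℤ) = (incVerts ends F).card + W.card := by
      have := Finset.card_sdiff_add_card_eq_card hsub
      rw [hW]
      exact_mod_cast (by omega : (incVerts ends F').card =
        (incVerts ends F).card + (incVerts ends F' \ incVerts ends F).card)
    have hc0 : (0:ℤ) ≤ c := le_trans (by positivity) hc
    simp only [fcount]
    rw [hcard]
    nlinarith [hkey]
  · intro X Y
    classical
    set VX := incVerts ends X with hVX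
    set VY := incVerts ends Y with hVY
    set A := rootsOf ends root X with hA
    set B := rootsOf ends root Y with hB
    set C := rootsOf ends root (X ∩ Y) with hC
    set W : Finset V := (VX ∩ VY) \ incVerts ends (X ∩ Y) with hW
    have hVsub : incVerts ends (X ∩ Y) ⊆ VX ∩ VY :=
      Finset.subset_inter (incVerts_mono ends (Finset.inter_subset_left))
        (incVerts_mono ends (Finset.inter_subset_right))
    have hVU : incVerts ends (X ∪ Y) = VX ∪ VY := incVerts_union ends X Y
    have hAB : rootsOf ends root (X ∪ Y) = A ∪ B := by
      rw [hA, hB, rootsOf_eq, rootsOf_eq, rootsOf_eq, hVU, rootsIn_union]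
    have hD : rootsIn root (VX ∩ VY) = A ∩ B := by
      rw [hA, hB, rootsOf_eq, rootsOf_eq, rootsIn_inter]
    have hDW : rootsIn root (VX ∩ VY) = C ∪ rootsIn root W := by
      rw [hC, rootsOf_eq, ← rootsIn_union, Finset.union_sdiff_of_subset hVsub]
    have hkey := nullity_key M root c hC1 hc W C
    rw [← hDW, hD] at hkey
    have hsubmod := M.rk_submodular A B
    have hcardAB : (A ∪ B).card + (A ∩ B).card = A.card + B.card :=
      Finset.card_union_add_card_inter A B
    have hcardV : (VX ∪ VY).card + (VX ∩ VY).card = VX.card + VY.card :=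
      Finset.card_union_add_card_inter VX VY
    have hcardW : ((VX ∩ VY).card : ℤ) = (incVerts ends (X ∩ Y)).card + W.card := by
      have := Finset.card_sdiff_add_card_eq_card hVsub
      rw [hW]
      exact_mod_cast (by omega : (VX ∩ VY).card =
        (incVerts ends (X ∩ Y)).card + ((VX ∩ VY) \ incVerts ends (X ∩ Y)).card)
    have hsubmod' : (M.rk (A ∪ B) : ℤ) + M.rk (A ∩ B) ≤ M.rk A + M.rk B := by
      exact_mod_cast hsubmod
    have hcardAB' : ((A ∪ B).card : ℤ) + (A ∩ B).card = A.card + B.card := by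
      exact_mod_cast hcardAB
    have hcardV' : ((VX ∪ VY).card : ℤ) + (VX ∩ VY).card = VX.card + VY.card := by
      exact_mod_cast hcardV
    simp only [fcount, hAB, hVU, ← hVX, ← hVY, ← hA, ← hB, ← hC]
    nlinarith [hkey, hsubmod', hcardAB', hcardV', hcardW]
end

section
/- Let (G,R) be a connected graph with roots with E≠∅, satisfying (C1), (C2), (C3) with respect to a matroid M on R of rank k. Then G has a good edge, i.e. an edge uv∈E with sp_M(R_u) ≠ sp_M(R_v). -/
open Finset
open scoped Classical

/-- The graph `G` (with edge map `ends`) is connected. -/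
def GraphConnected {V E : Type*} [Fintype E] (ends : E → Sym2 V) : Prop :=
  ∀ u v : V, Relation.ReflTransGen (adjIn ends Finset.univ) u v

lemma rk_union_of_span {ι : Type*} [Fintype ι] (M : FinMatroid ι) (X : Finset ι)
    (Y : Finset ι) (h : ∀ y ∈ Y, M.rk (insert y X) = M.rk X) :
    M.rk (X ∪ Y) = M.rk X := by
  classical
  induction Y using Finset.induction_on with
  | empty => simp
  | @insert a s ha ih =>
    have hXs : M.rk (X ∪ s) = M.rk X := ih (fun y hy => h y (Finset.mem_insert_of_mem hy))
    have ha' : M.rk (insert a X) = M.rk X := h a (Finset.mem_insert_self a s)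
    have hsub := M.rk_submodular (X ∪ s) (insert a X)
    have hunion : (X ∪ s) ∪ insert a X = X ∪ insert a s := by
      ext x; simp [Finset.mem_union, Finset.mem_insert]; tauto
    have hinter : X ⊆ (X ∪ s) ∩ insert a X := by
      intro x hx
      simp [Finset.mem_inter, Finset.mem_union, Finset.mem_insert, hx]
    have hmono1 := M.rk_mono hinter
    have hmono2 := M.rk_mono (Finset.subset_union_left (s₁ := X) (s₂ := insert a s))
    rw [hunion, hXs, ha'] at hsub
    omega

/-- **Claim 3 (existence of a good edge).**
Let `(G, R)` be a connected graph with roots with `E ≠ ∅`, satisfying (C1), (C2), (C3)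
with respect to a matroid `M` of rank `k`.  Then `G` has a good edge, i.e. an edge `uv ∈ E`
with `sp_M(R_u) ≠ sp_M(R_v)`. -/
theorem exists_good_edge {V E ι : Type*} [Fintype V] [Fintype E] [Fintype ι]
    (ends : E → Sym2 V) (root : ι → V) (M : FinMatroid ι) (k : ℕ)
    (hk : M.rk Finset.univ = k)
    (hconn : GraphConnected ends)
    (hEne : Nonempty E)
    (hC1 : CondC1 root M.rk) (hC2 : CondC2 ends root M.rk k) (hC3 : CondC3 V E ι k) :
    ∃ e : E, ∃ u v : V, ends e = s(u, v) ∧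
      spOf M.rk (rootsAt root u) ≠ spOf M.rk (rootsAt root v) := by
  by_contra hno
  push_neg at hno
  -- span is constant along edges, hence on the whole connected graph
  have hedge : ∀ (u v : V), adjIn ends Finset.univ u v →
      spOf M.rk (rootsAt root u) = spOf M.rk (rootsAt root v) := by
    rintro u v ⟨e, -, he⟩
    exact hno e u v he
  have hspan : ∀ u v : V, spOf M.rk (rootsAt root u) = spOf M.rk (rootsAt root v) := by
    intro u v
    have h := hconn u v
    induction h with
    | refl => rfl
    | tail _ hadj ih => exact ih.trans (hedge _ _ hadj)
  rcases hEne with ⟨e0⟩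
  obtain ⟨⟨a, b⟩, hab⟩ := Quot.exists_rep (ends e0)
  -- every root lies in the common span
  have hmemS : ∀ (i : ι) (v : V), i ∈ spOf M.rk (rootsAt root v) := by
    intro i v
    rw [hspan v (root i)]
    have hi : i ∈ rootsAt root (root i) := by simp [rootsAt]
    simp [spOf, Finset.insert_eq_self.mpr hi]
  -- hence every rootsAt spans the whole matroid
  have hrk : ∀ v : V, M.rk (rootsAt root v) = k := by
    intro v
    have h1 : M.rk (rootsAt root v ∪ Finset.univ) = M.rk (rootsAt root v) := by
      apply rk_union_of_span
      intro y _
      have := hmemS y v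
      simpa [spOf] using this
    have h2 : rootsAt root v ∪ Finset.univ = Finset.univ := by simp
    rw [h2] at h1
    rw [← h1, hk]
  have hcard : ∀ v : V, (rootsAt root v).card = k := by
    intro v
    rw [← hC1 v, hrk v]
  -- apply C2 to F = univ
  have hFne : (Finset.univ : Finset E).Nonempty := ⟨e0, Finset.mem_univ e0⟩
  have hC2' := hC2 Finset.univ hFne
  -- rootsOf univ = biUnion of rootsAt over incVerts
  have hro : rootsOf ends root (Finset.univ : Finset E) =
      (incVerts ends (Finset.univ : Finset E)).biUnion (rootsAt root) := by
    ext i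
    simp only [rootsOf, Finset.mem_filter, Finset.mem_univ, true_and, Finset.mem_biUnion,
      rootsAt]
    constructor
    · intro h; exact ⟨root i, h, by simp⟩
    · rintro ⟨v, hv, hi⟩
      rwa [hi]
  have hrocard : (rootsOf ends root (Finset.univ : Finset E)).card =
      k * (incVerts ends (Finset.univ : Finset E)).card := by
    rw [hro, Finset.card_biUnion]
    · rw [Finset.sum_congr rfl (fun v _ => hcard v)]
      simp [Finset.sum_const, Nat.mul_comm]
    · intro u hu v hv huv
      simp only [Finset.disjoint_left, rootsAt, Finset.mem_filter, Finset.mem_univ, true_and]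
      intro i hiu hiv
      exact huv (hiu ▸ hiv ▸ rfl)
  have hrole : M.rk (rootsOf ends root (Finset.univ : Finset E)) ≤ k := by
    rw [← hk]
    exact M.rk_mono (Finset.subset_univ _)
  have hEpos : 0 < (Finset.univ : Finset E).card := Finset.card_pos.mpr hFne
  omega
end

section
/- Let (G,R) be a connected graph with roots satisfying (C1), (C2), (C3) with respect to a matroid M on R of rank k, and suppose every proper tight set of G is balanced (i.e. for every nonempty F⊆E with |F|=f_{M,k}(F) and V(F)≠V, every v∈V(F) satisfies sp_M(R_v)=sp_M(R_F)). Let uv∈E be an edge with sp_M(R_v) ⊄ sp_M(R_u), and let r_j∈R_v be such that R_u∪{r_j} is independent in M. Form a new root r as a copy of the vertex u, set R''=R∪{r}, let M'' be the matroid on R'' obtained from M by adding r as an element parallel to r_j (so that r_{M''}(X)=r_M(X∩R) if r∉X and r_{M''}(X)=r_M((X∩R)∪{r_j}) if r∈X), and let G''=(V,E−uv). Then (G'',R'') satisfies (C1), (C2), (C3) with respect to M''. -/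
open Finset
open scoped Classical

lemma card_sum_aux {ι : Type*} (S : Finset (ι ⊕ Unit)) :
    S.card = S.toLeft.card + (if Sum.inr () ∈ S then 1 else 0) := by
  rw [← Finset.card_toLeft_add_card_toRight]
  congr 1
  by_cases h : Sum.inr () ∈ S
  · rw [if_pos h]
    have : S.toRight = {()} := by
      ext x; cases x; simp [Finset.mem_toRight, h]
    simp [this]
  · rw [if_neg h]
    have : S.toRight = ∅ := by
      ext x; cases x; simp [Finset.mem_toRight, h]
    simp [this]

/-- **Lemma (splitting off a good edge preserves the conditions).**
Let `(G, R)` be a connected graph with roots satisfying (C1), (C2), (C3) with respect to a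
matroid `M` of rank `k`, in which every proper tight set is balanced.  Let `uv ∈ E` be an
edge with `sp_M(R_v) ⊄ sp_M(R_u)` and `r_j ∈ R_v` with `R_u ∪ {r_j}` independent.  Add a new
root `r` at the vertex `u` (ground set `ι ⊕ Unit`), let `M''` be obtained from `M` by adding
`r` parallel to `r_j`, and let `G'' = (V, E - uv)`.  Then `(G'', R'')` satisfies (C1), (C2),
(C3) with respect to `M''`. -/
theorem good_edge_split_conditions {V E ι : Type*} [Fintype V] [Fintype E] [Fintype ι]
    (ends : E → Sym2 V) (root : ι → V) (M : FinMatroid ι) (k : ℕ)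
    (hk : M.rk Finset.univ = k)
    (hconn : GraphConnected ends)
    (hC1 : CondC1 root M.rk) (hC2 : CondC2 ends root M.rk k) (hC3 : CondC3 V E ι k)
    (hbal : ∀ F : Finset E, F.Nonempty →
      (F.card : ℤ) = fcount ends root M.rk (k : ℤ) F →
      incVerts ends F ≠ Finset.univ →
      ∀ v ∈ incVerts ends F,
        spOf M.rk (rootsAt root v) = spOf M.rk (rootsOf ends root F))
    (e₀ : E) (u v : V) (he₀ : ends e₀ = s(u, v))
    (hgood : ¬ spOf M.rk (rootsAt root v) ⊆ spOf M.rk (rootsAt root u))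
    (j : ι) (hj : root j = v) (hindep : M.Indep (insert j (rootsAt root u)))
    -- the extended root map `root''` on `R'' = R ∪ {r}` (the new root `r` is a copy of `u`)
    (root'' : ι ⊕ Unit → V) (hroot'' : root'' = Sum.elim root (fun _ => u))
    -- the rank function of `M''`: `r` is added parallel to `r_j`
    (ρ'' : Finset (ι ⊕ Unit) → ℕ)
    (hρ'' : ∀ X : Finset (ι ⊕ Unit),
      ρ'' X = if Sum.inr () ∈ X then M.rk (insert j X.toLeft) else M.rk X.toLeft) :
    -- (C1) for `(G'', R'')` with respect to `M''`
    (∀ w : V, ρ'' (rootsAt root'' w) = (rootsAt root'' w).card) ∧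
    -- (C2) for `(G'', R'')` (edge set `E - e₀`) with respect to `M''`
    (∀ F : Finset E, e₀ ∉ F → F.Nonempty →
      F.card + (rootsOf ends root'' F).card + k ≤
        k * (incVerts ends F).card + ρ'' (rootsOf ends root'' F)) ∧
    -- (C3) for `(G'', R'')` with respect to `M''`
    (Fintype.card E - 1) + Fintype.card (ι ⊕ Unit) = k * Fintype.card V := by

  subst hroot''
  have huv : u ≠ v := fun h => hgood (by rw [h])
  have hjnotu : j ∉ rootsAt root u := by
    simp [rootsAt, hj]; exact (huv ·.symm)
  have hindep' : M.rk (insert j (rootsAt root u)) = (rootsAt root u).card + 1 := by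
    have h := hindep
    unfold FinMatroid.Indep at h
    rwa [Finset.card_insert_of_notMem hjnotu] at h
  -- toLeft of rootsAt
  have htlA : ∀ w : V, (rootsAt (Sum.elim root fun _ : Unit => u) w).toLeft = rootsAt root w := by
    intro w; ext a; simp [rootsAt, Finset.mem_toLeft]
  have hinrA : ∀ w : V, (Sum.inr () ∈ rootsAt (Sum.elim root fun _ : Unit => u) w) ↔ u = w := by
    intro w; simp [rootsAt]
  refine ⟨?_, ?_, ?_⟩
  · -- C1
    intro w
    rw [hρ'', card_sum_aux (rootsAt (Sum.elim root fun _ : Unit => u) w), htlA]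
    by_cases hw : u = w
    · subst hw
      rw [if_pos ((hinrA u).mpr rfl), if_pos ((hinrA u).mpr rfl), hindep']
    · rw [if_neg (fun h => hw ((hinrA w).mp h)), if_neg (fun h => hw ((hinrA w).mp h)),
        hC1 w]
      omega
  · -- C2
    intro F he₀F hFne
    set A := rootsOf ends root F with hA
    have htlF : (rootsOf ends (Sum.elim root fun _ : Unit => u) F).toLeft = A := by
      ext a; simp [rootsOf, Finset.mem_toLeft, hA]
    have hinrF : (Sum.inr () ∈ rootsOf ends (Sum.elim root fun _ : Unit => u) F) ↔
        u ∈ incVerts ends F := by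
      simp [rootsOf]
    rw [hρ'', card_sum_aux (rootsOf ends (Sum.elim root fun _ : Unit => u) F), htlF]
    by_cases hu : u ∈ incVerts ends F
    · rw [if_pos (hinrF.mpr hu), if_pos (hinrF.mpr hu)]
      by_cases hv : v ∈ incVerts ends F
      · -- both endpoints in V(F): use F ∪ {e₀}
        have hjA : j ∈ A := by simp [hA, rootsOf, hj, hv]
        have hins : insert j A = A := Finset.insert_eq_self.mpr hjA
        have hVF' : incVerts ends (insert e₀ F) = incVerts ends F := by
          ext w
          simp only [incVerts, Finset.mem_filter, Finset.mem_univ, true_and,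
            Finset.mem_insert]
          constructor
          · rintro ⟨e, (rfl | heF), hwe⟩
            · rw [he₀] at hwe
              rcases Sym2.mem_iff.mp hwe with rfl | rfl
              · simpa [incVerts] using hu
              · simpa [incVerts] using hv
            · exact ⟨e, heF, hwe⟩
          · rintro ⟨e, heF, hwe⟩; exact ⟨e, Or.inr heF, hwe⟩
        have hRF' : rootsOf ends root (insert e₀ F) = A := by
          simp [rootsOf, hVF', hA]
        have h2 := hC2 (insert e₀ F) ⟨e₀, Finset.mem_insert_self _ _⟩
        rw [hVF', hRF', Finset.card_insert_of_notMem he₀F] at h2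
        rw [hins]
        omega
      · -- v ∉ V(F)
        by_cases hjsp : M.rk (insert j A) = M.rk A
        · -- then F cannot be tight
          have h2 := hC2 F hFne
          rw [← hA] at h2
          by_contra hcon
          push_neg at hcon
          have htight : F.card + A.card + k = k * (incVerts ends F).card + M.rk A := by
            omega
          have htightZ : (F.card : ℤ) = fcount ends root M.rk (k : ℤ) F := by
            unfold fcount
            rw [← hA]
            push_cast
            have hle := M.rk_le_card A
            linarith [htight]
          have hne : incVerts ends F ≠ Finset.univ := by
            intro h; rw [h] at hv; exact hv (Finset.mem_univ v)
          have hsp := hbal F hFne htightZ hne u hu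
          have hjmem : j ∈ spOf M.rk A := by
            simp [spOf, hjsp]
          rw [← hA] at hsp
          rw [← hsp] at hjmem
          simp only [spOf, Finset.mem_filter] at hjmem
          rw [hindep', hC1 u] at hjmem
          omega
        · have hmono : M.rk A ≤ M.rk (insert j A) :=
            M.rk_mono (Finset.subset_insert _ _)
          have h2 := hC2 F hFne
          rw [← hA] at h2
          omega
    · rw [if_neg (fun h => hu (hinrF.mp h)), if_neg (fun h => hu (hinrF.mp h))]
      have h2 := hC2 F hFne
      rw [← hA] at h2
      omega
  · -- C3
    have hE : 1 ≤ Fintype.card E := Fintype.card_pos_iff.mpr ⟨e₀⟩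
    have hsum : Fintype.card (ι ⊕ Unit) = Fintype.card ι + 1 := by
      simp [Fintype.card_sum]
    have hC3' := hC3
    unfold CondC3 at hC3'
    rw [hsum]
    omega
end

section
/- Let (G,p) be a 2-dimensional bar-joint framework with G=(V,E) a finite graph and p:V→ℝ² injective, and let (G,b) be the body-bar framework derived from it, with bar-configuration b_{uv}=(p(u),1)∧(p(v),1)∈⋀²ℝ³ for uv∈E. Then (G,p) is infinitesimally rigid as a bar-joint framework if and only if (G,b) is bar-joint-rigid, i.e. every infinitesimal motion of (G,b) is a linear combination of trivial motions and trivial danglings. -/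
open Finset
open scoped Classical

/-- The Euclidean inner product on `ℝ²`. -/
def dot2 (x y : Fin 2 → ℝ) : ℝ := x 0 * y 0 + x 1 * y 1

/-- The canonical affine lift `ℝ² → ℝ³`, `x ↦ (x, 1)`. -/
def lift2 (x : Fin 2 → ℝ) : Fin 3 → ℝ := ![x 0, x 1, 1]

/-- An infinitesimal motion of the 2-dimensional bar-joint framework `(G, p)`:
a map `m : V → ℝ²` with `⟨p(u) - p(w), m(u) - m(w)⟩ = 0` for every edge `uw`. -/
def IsBJMotion {V E : Type*} (ends : E → Sym2 V) (p : V → Fin 2 → ℝ)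
    (m : V → Fin 2 → ℝ) : Prop :=
  ∀ e : E, ∀ u w : V, ends e = s(u, w) → dot2 (p u - p w) (m u - m w) = 0

/-- A trivial motion of `(G, p)`: the restriction to the joints of an infinitesimal
isometry of `ℝ²`, i.e. `m(v) = S p(v) + t` with `S` skew-symmetric. -/
def IsTrivialBJMotion {V : Type*} (p : V → Fin 2 → ℝ) (m : V → Fin 2 → ℝ) : Prop :=
  ∃ S : Matrix (Fin 2) (Fin 2) ℝ, S.transpose = -S ∧
    ∃ t : Fin 2 → ℝ, ∀ v : V, m v = S.mulVec (p v) + t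

/-- An infinitesimal motion of the body-bar framework `(G, b)` derived from `(G, p)`
(with `b_{uw} = (p(u),1) ∧ (p(w),1)`): a map `m : V → ℝ³ = ⋀¹ℝ³` with
`(m(u) - m(w)) ∧ b_{uw} = 0` in `⋀³ℝ³` for every edge `uw`. -/
def IsDerivedBBMotion {V E : Type*} (ends : E → Sym2 V) (p : V → Fin 2 → ℝ)
    (m : V → Fin 3 → ℝ) : Prop :=
  ∀ e : E, ∀ u w : V, ends e = s(u, w) →
    ExteriorAlgebra.ι ℝ (m u - m w) *
      (ExteriorAlgebra.ι ℝ (lift2 (p u)) * ExteriorAlgebra.ι ℝ (lift2 (p w))) = 0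


noncomputable def detF : ∀ i : ℕ, ((Fin 3 → ℝ) [⋀^Fin i]→ₗ[ℝ] ℝ)
  | 3 => Matrix.detRowAlternating
  | _ => 0

lemma wedge_det (a b c : Fin 3 → ℝ) :
    ExteriorAlgebra.liftAlternating detF
      (ExteriorAlgebra.ι ℝ a * (ExteriorAlgebra.ι ℝ b * ExteriorAlgebra.ι ℝ c)) =
      Matrix.det (Matrix.of ![a, b, c]) := by
  have h : ExteriorAlgebra.ι ℝ a * (ExteriorAlgebra.ι ℝ b * ExteriorAlgebra.ι ℝ c)
      = ExteriorAlgebra.ιMulti ℝ 3 ![a, b, c] := by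
    rw [ExteriorAlgebra.ιMulti_apply]
    simp [List.ofFn_succ, mul_assoc]
  rw [h, ExteriorAlgebra.liftAlternating_apply_ιMulti]
  rfl

lemma wedge_zero_of_smul_sub (α : ℝ) (b c : Fin 3 → ℝ) :
    ExteriorAlgebra.ι ℝ (α • (b - c)) * (ExteriorAlgebra.ι ℝ b * ExteriorAlgebra.ι ℝ c) = 0 := by
  rw [map_smul, map_sub, smul_mul_assoc, sub_mul]
  have h1 : ExteriorAlgebra.ι ℝ b * (ExteriorAlgebra.ι ℝ b * ExteriorAlgebra.ι ℝ c) = 0 := by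
    rw [← mul_assoc, ExteriorAlgebra.ι_sq_zero, zero_mul]
  have hcb : ExteriorAlgebra.ι ℝ c * ExteriorAlgebra.ι ℝ b
      = -(ExteriorAlgebra.ι ℝ b * ExteriorAlgebra.ι ℝ c) := by
    have := ExteriorAlgebra.ι_add_mul_swap (R := ℝ) b c
    exact eq_neg_of_add_eq_zero_right this
  have h2 : ExteriorAlgebra.ι ℝ c * (ExteriorAlgebra.ι ℝ b * ExteriorAlgebra.ι ℝ c) = 0 := by
    rw [← mul_assoc, hcb, neg_mul, mul_assoc, ExteriorAlgebra.ι_sq_zero, mul_zero, neg_zero]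
  rw [h1, h2, sub_zero, smul_zero]

/-- **Proposition 1 (bar-joint rigidity via derived body-bar frameworks).**
A 2-dimensional bar-joint framework `(G, p)` is infinitesimally rigid (every motion is
trivial) if and only if the derived body-bar framework `(G, b)` is bar-joint-rigid:
every infinitesimal motion of `(G, b)` is a linear combination of trivial motions
(constants) and trivial danglings (`v ↦ c_v • (p(v), 1)`). -/
theorem bar_joint_rigid_iff_derived_body_bar_rigid {V E : Type*} [Fintype V] [Fintype E]
    (ends : E → Sym2 V) (p : V → Fin 2 → ℝ) (hp : Function.Injective p) :
    (∀ m : V → Fin 2 → ℝ, IsBJMotion ends p m → IsTrivialBJMotion p m) ↔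
    (∀ m : V → Fin 3 → ℝ, IsDerivedBBMotion ends p m →
      ∃ t : Fin 3 → ℝ, ∃ c : V → ℝ, ∀ v : V, m v = t + c v • lift2 (p v)) := by
  constructor
  · intro hBJ m hm
    set m2 : V → Fin 2 → ℝ :=
      fun v => ![-(m v 1 - m v 2 * p v 1), m v 0 - m v 2 * p v 0] with hm2
    have hmot : IsBJMotion ends p m2 := by
      intro e u w he
      have h0 := hm e u w he
      have hdet : Matrix.det (Matrix.of ![m u - m w, lift2 (p u), lift2 (p w)]) = 0 := by
        rw [← wedge_det, h0, map_zero]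
      rw [Matrix.det_fin_three] at hdet
      simp [lift2, Matrix.vecHead, Matrix.vecTail] at hdet
      simp [dot2, hm2]
      linear_combination hdet
    obtain ⟨S, hS, t', ht'⟩ := hBJ m2 hmot
    have hS00 : S 0 0 = 0 := by
      have h := congrFun (congrFun hS 0) 0
      simp only [Matrix.transpose_apply, Matrix.neg_apply] at h
      linarith
    have hS11 : S 1 1 = 0 := by
      have h := congrFun (congrFun hS 1) 1
      simp only [Matrix.transpose_apply, Matrix.neg_apply] at h
      linarith
    have hS10 : S 1 0 = -(S 0 1) := by
      have h := congrFun (congrFun hS 0) 1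
      simp only [Matrix.transpose_apply, Matrix.neg_apply] at h
      linarith
    refine ⟨![t' 1, -(t' 0), S 0 1], fun v => m v 2 - S 0 1, fun v => ?_⟩
    have h0 := congrFun (ht' v) 0
    have h1 := congrFun (ht' v) 1
    simp only [hm2, Matrix.cons_val_zero, Matrix.cons_val_one, Matrix.head_cons, Pi.add_apply,
      Matrix.mulVec, dotProduct, Fin.sum_univ_two, hS00, hS11, hS10] at h0 h1
    funext j
    fin_cases j
    · simp [lift2]
      linarith [h0, h1]
    · simp [lift2]
      linarith [h0, h1]
    · simp [lift2]
  · intro hBB m hm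
    set M : V → Fin 3 → ℝ := fun v => ![m v 1, -(m v 0), 0] with hM
    have hmot : IsDerivedBBMotion ends p M := by
      intro e u w he
      have hd := hm e u w he
      simp only [dot2, Pi.sub_apply] at hd
      by_cases huw : u = w
      · subst huw
        simp
      · have hpuw : p u ≠ p w := fun h => huw (hp h)
        have hcases : p u 0 ≠ p w 0 ∨ p u 1 ≠ p w 1 := by
          by_contra hno
          push_neg at hno
          exact hpuw (funext fun j => by fin_cases j <;> simp [hno.1, hno.2])
        obtain ⟨α, hα0, hα1⟩ : ∃ α : ℝ, m u 1 - m w 1 = α * (p u 0 - p w 0) ∧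
            -(m u 0) - -(m w 0) = α * (p u 1 - p w 1) := by
          rcases hcases with h' | h'
          · have hne : p u 0 - p w 0 ≠ 0 := sub_ne_zero.mpr h'
            refine ⟨(m u 1 - m w 1) / (p u 0 - p w 0), (div_mul_cancel₀ _ hne).symm, ?_⟩
            rw [div_mul_eq_mul_div, eq_div_iff hne]
            linear_combination -hd
          · have hne : p u 1 - p w 1 ≠ 0 := sub_ne_zero.mpr h'
            refine ⟨(-(m u 0) - -(m w 0)) / (p u 1 - p w 1), ?_,
              (div_mul_cancel₀ _ hne).symm⟩
            rw [div_mul_eq_mul_div, eq_div_iff hne]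
            linear_combination hd
        have hdiff : M u - M w = α • (lift2 (p u) - lift2 (p w)) := by
          funext j
          fin_cases j
          · simp [hM, lift2]
            linarith [hα0, hα1]
          · simp [hM, lift2]
            linarith [hα0, hα1]
          · simp [hM, lift2]
        rw [hdiff]
        exact wedge_zero_of_smul_sub α _ _
    obtain ⟨t, c, hMtc⟩ := hBB M hmot
    have hc : ∀ v, c v = -(t 2) := by
      intro v
      have h2 := congrFun (hMtc v) 2
      simp only [hM, Matrix.cons_val_two, Matrix.tail_cons, Matrix.head_cons, Pi.add_apply,
        Pi.smul_apply, smul_eq_mul, lift2] at h2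
      linarith
    refine ⟨!![0, t 2; -(t 2), 0], ?_, ![-(t 1), t 0], fun v => ?_⟩
    · ext i j
      fin_cases i <;> fin_cases j <;>
        simp [Matrix.transpose_apply]
    · have h0 := congrFun (hMtc v) 0
      have h1 := congrFun (hMtc v) 1
      simp only [hM, Matrix.cons_val_zero, Matrix.cons_val_one, Matrix.head_cons, Pi.add_apply,
        Pi.smul_apply, smul_eq_mul, lift2, hc v] at h0 h1
      funext j
      fin_cases j
      · simp [Matrix.vecHead, Matrix.vecTail]
        linarith [h0, h1]
      · simp [Matrix.vecHead, Matrix.vecTail]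
        linarith [h0, h1]
end

section
/- Let G=(V,E) be a finite graph with a finite multiset R of vertices satisfying conditions (C1) and (C3) with respect to a matroid M on R of rank k, let G*=(V,E∪L) be the graph obtained by adding, for each r∈R, a self-loop (an element of L in bijection with R) at the vertex r, and regard M as a matroid on L. Define g_{k,0}(F)=k|V(F)|+r_M(F∩L) for F⊆E∪L. Let H_0=(V_0^+,V_0^−;A_0) be the bipartite graph with V_0^+=E∪L, V_0^−=(V¹∪…∪V^k)∪L' where V¹,…,V^k are k disjoint copies of V and L' is a copy of L, and A_0 consisting of the pairs (e,e') with e∈L and e'∈L' its copy, together with all pairs (e,v^i) such that v^i∈V^i is the i-th copy of a vertex v∈V incident to e∈E∪L in G*. Equip V_0^− with the matroid N^− that is the direct sum of M on L' and the free matroid on V¹∪…∪V^k, and V_0^+ with the free matroid. Then |F| ≤ g_{k,0}(F) holds for every F⊆E∪L if and only if H_0 has an independent matching covering V_0^+. -/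
open Finset
open scoped Classical

/-- Incidence of a vertex `v` with an element of `E ∪ L` in the graph `G*` obtained by
adding a self-loop at the vertex of each root. -/
def incStar {V E ι : Type*} (ends : E → Sym2 V) (root : ι → V) (v : V) : E ⊕ ι → Prop
  | Sum.inl e => v ∈ ends e
  | Sum.inr r => root r = v

/-- The vertex set `V(F)` of a subset `F ⊆ E ∪ L` in `G*`. -/
noncomputable def incVertsStar {V E ι : Type*} [Fintype V] (ends : E → Sym2 V)
    (root : ι → V) (F : Finset (E ⊕ ι)) : Finset V :=
  Finset.univ.filter (fun v => ∃ x ∈ F, incStar ends root v x)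

/-- The loop part `F ∩ L` of a subset `F ⊆ E ∪ L`. -/
noncomputable def loopPart {E ι : Type*} [Fintype ι] (F : Finset (E ⊕ ι)) : Finset ι :=
  Finset.univ.filter (fun r => Sum.inr r ∈ F)

/-- The adjacency of the auxiliary bipartite graph `H₀ = (V₀⁺, V₀⁻; A₀)`:
`V₀⁺ = E ∪ L`, `V₀⁻ = (V¹ ∪ ⋯ ∪ Vᵏ) ∪ L'`; each `e ∈ L` is joined to its copy `e' ∈ L'`,
and each `e ∈ E ∪ L` is joined to every copy `vⁱ` of every vertex `v` incident to `e`
in `G*`. -/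
def adjH0 {V E ι : Type*} (ends : E → Sym2 V) (root : ι → V) (k : ℕ) :
    E ⊕ ι → (Fin k × V) ⊕ ι → Prop
  | x, Sum.inl (_, v) => incStar ends root v x
  | Sum.inr r, Sum.inr r' => r' = r
  | Sum.inl _, Sum.inr _ => False

section AuxMatroid
variable {κ : Type*} [Fintype κ] (M : FinMatroid κ)

lemma FinMatroid.rk_insert_le' (x : κ) (Y : Finset κ) :
    M.rk (insert x Y) ≤ M.rk Y + 1 := by
  have h := M.rk_submodular {x} Y
  have h1 : M.rk {x} ≤ 1 := le_trans (M.rk_le_card _) (by simp)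
  rw [Finset.insert_eq]
  omega

lemma FinMatroid.rk_union_le' (Y S : Finset κ) : M.rk (Y ∪ S) ≤ M.rk Y + S.card := by
  classical
  induction S using Finset.induction_on with
  | empty => simp
  | @insert a S ha ih =>
      have h1 : Y ∪ insert a S = insert a (Y ∪ S) := by
        ext z; simp [or_comm, or_left_comm, or_assoc]
      have h2 := M.rk_insert_le' a (Y ∪ S)
      rw [h1, Finset.card_insert_of_notMem ha]
      omega

lemma FinMatroid.indep_subset' {X Y : Finset κ} (hX : M.Indep X) (h : Y ⊆ X) :
    M.Indep Y := by
  classical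
  have h1 : M.rk X ≤ M.rk Y + (X \ Y).card := by
    have := M.rk_union_le' Y (X \ Y)
    rwa [Finset.union_sdiff_of_subset h] at this
  have h2 : (X \ Y).card + Y.card = X.card := Finset.card_sdiff_add_card_eq_card h
  have h3 := M.rk_le_card Y
  unfold FinMatroid.Indep at *
  omega

end AuxMatroid
section Rado
set_option linter.unusedSectionVars false
variable {A B : Type*} [Fintype A] [Fintype B] [DecidableEq B]

lemma rado_aux (ρ : FinMatroid B) :
    ∀ (n : ℕ) (N : A → Finset B), (∑ a, (N a).card) ≤ n →
      (∀ S : Finset A, S.card ≤ ρ.rk (S.biUnion N)) →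
      ∃ f : A → B, Function.Injective f ∧ (∀ a, f a ∈ N a) ∧
        ρ.rk (Finset.univ.image f) = Fintype.card A := by
  classical
  intro n
  induction n with
  | zero =>
      intro N hn h
      -- every N a is empty, so A is empty
      have hemp : ∀ a : A, N a = ∅ := by
        intro a
        exact Finset.card_eq_zero.mp (Nat.le_zero.mp (le_trans
          (Finset.single_le_sum (f := fun a => (N a).card)
            (fun a _ => Nat.zero_le _) (Finset.mem_univ a)) hn))
      have hA : IsEmpty A := by
        by_contra hne
        simp only [not_isEmpty_iff] at hne
        obtain ⟨a⟩ := hne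
        have h1 := h {a}
        simp [hemp, Finset.biUnion_singleton] at h1
        have := ρ.rk_le_card (∅ : Finset B)
        simp at this
        omega
      refine ⟨fun a => (hA.false a).elim, ?_, ?_, ?_⟩
      · intro a; exact (hA.false a).elim
      · intro a; exact (hA.false a).elim
      · have : (Finset.univ : Finset A) = ∅ := Finset.univ_eq_empty
        rw [this]
        have := ρ.rk_le_card (∅ : Finset B)
        simp at this ⊢
        omega
  | succ n ih =>
      intro N hn h
      by_cases hbig : ∃ a : A, 2 ≤ (N a).card
      · obtain ⟨a, ha⟩ := hbig
        obtain ⟨y₁, hy₁, y₂, hy₂, hne⟩ := Finset.one_lt_card.mp ha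
        -- two candidate reduced systems
        set N₁ := Function.update N a ((N a).erase y₁) with hN₁
        set N₂ := Function.update N a ((N a).erase y₂) with hN₂
        have hsum : ∀ (y : B), y ∈ N a →
            (∑ b, ((Function.update N a ((N a).erase y)) b).card) ≤ n := by
          intro y hy
          have h1 : ∑ b, ((Function.update N a ((N a).erase y)) b).card
              = (∑ b, (N b).card) - 1 := by
            rw [← Finset.sum_erase_add Finset.univ
                  (fun b => ((Function.update N a ((N a).erase y)) b).card)
                  (Finset.mem_univ a),
                ← Finset.sum_erase_add Finset.univ (fun b => (N b).card)
                  (Finset.mem_univ a)]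
            have h2 : ∑ b ∈ Finset.univ.erase a,
                ((Function.update N a ((N a).erase y)) b).card
                = ∑ b ∈ Finset.univ.erase a, (N b).card := by
              apply Finset.sum_congr rfl
              intro b hb
              rw [Function.update_of_ne (Finset.ne_of_mem_erase hb)]
            rw [h2, Function.update_self, Finset.card_erase_of_mem hy]
            omega
          omega
        -- at least one of the reduced systems satisfies the Rado condition
        have hkey : (∀ S : Finset A, S.card ≤ ρ.rk (S.biUnion N₁)) ∨
            (∀ S : Finset A, S.card ≤ ρ.rk (S.biUnion N₂)) := by
          by_contra hcon
          push_neg at hcon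
          obtain ⟨⟨S₁, hS₁⟩, ⟨S₂, hS₂⟩⟩ := hcon
          -- a must belong to S₁ and S₂
          have hmem : ∀ (y : B) (S : Finset A),
              ρ.rk (S.biUnion (Function.update N a ((N a).erase y))) < S.card → a ∈ S := by
            intro y S hS
            by_contra haS
            have : S.biUnion (Function.update N a ((N a).erase y)) = S.biUnion N := by
              apply Finset.biUnion_congr rfl
              intro b hb
              rw [Function.update_of_ne (fun hba => haS (by rw [hba] at hb; exact hb))]
            rw [this] at hS
            exact absurd (h S) (by omega)
          have ha₁ : a ∈ S₁ := hmem y₁ S₁ hS₁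
          have ha₂ : a ∈ S₂ := hmem y₂ S₂ hS₂
          -- union covers N(S₁ ∪ S₂)
          have hu : (S₁ ∪ S₂).biUnion N ⊆ S₁.biUnion N₁ ∪ S₂.biUnion N₂ := by
            intro z hz
            simp only [Finset.mem_biUnion, Finset.mem_union] at hz ⊢
            obtain ⟨b, hb, hzb⟩ := hz
            by_cases hba : b = a
            · subst hba
              by_cases hz1 : z = y₁
              · right
                refine ⟨b, ha₂, ?_⟩
                rw [hN₂, Function.update_self, Finset.mem_erase]
                exact ⟨by rw [hz1]; exact hne, hzb⟩
              · left
                refine ⟨b, ha₁, ?_⟩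
                rw [hN₁, Function.update_self, Finset.mem_erase]
                exact ⟨hz1, hzb⟩
            · rcases hb with hb | hb
              · left; exact ⟨b, hb, by rw [hN₁, Function.update_of_ne hba]; exact hzb⟩
              · right; exact ⟨b, hb, by rw [hN₂, Function.update_of_ne hba]; exact hzb⟩
          -- intersection contains N((S₁ ∩ S₂) \ {a})
          have hi : ((S₁ ∩ S₂).erase a).biUnion N ⊆ S₁.biUnion N₁ ∩ S₂.biUnion N₂ := by
            intro z hz
            simp only [Finset.mem_biUnion, Finset.mem_inter, Finset.mem_erase] at hz ⊢
            obtain ⟨b, ⟨hba, hb1, hb2⟩, hzb⟩ := hz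
            constructor
            · exact ⟨b, hb1, by rw [hN₁, Function.update_of_ne hba]; exact hzb⟩
            · exact ⟨b, hb2, by rw [hN₂, Function.update_of_ne hba]; exact hzb⟩
          have h1 : ρ.rk ((S₁ ∪ S₂).biUnion N) ≤ ρ.rk (S₁.biUnion N₁ ∪ S₂.biUnion N₂) := ρ.rk_mono hu
          have h2 : ρ.rk (((S₁ ∩ S₂).erase a).biUnion N) ≤ ρ.rk (S₁.biUnion N₁ ∩ S₂.biUnion N₂) := ρ.rk_mono hi
          have h3 : ρ.rk (S₁.biUnion N₁ ∪ S₂.biUnion N₂)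
              + ρ.rk (S₁.biUnion N₁ ∩ S₂.biUnion N₂)
              ≤ ρ.rk (S₁.biUnion N₁) + ρ.rk (S₂.biUnion N₂) := by
            have hh := ρ.rk_submodular (S₁.biUnion N₁) (S₂.biUnion N₂)
            have e1 : (S₁.biUnion N₁ ∪ S₂.biUnion N₂ : Finset B)
                = @Union.union _ (@Finset.instUnion _
                    (fun a b => Classical.propDecidable (a = b)))
                    (S₁.biUnion N₁) (S₂.biUnion N₂) := by
              ext z; simp [Finset.mem_union]
            have e2 : (S₁.biUnion N₁ ∩ S₂.biUnion N₂ : Finset B)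
                = @Inter.inter _ (@Finset.instInter _
                    (fun a b => Classical.propDecidable (a = b)))
                    (S₁.biUnion N₁) (S₂.biUnion N₂) := by
              ext z; simp [Finset.mem_inter]
            rw [e1, e2]
            exact hh
          have h4 := h (S₁ ∪ S₂)
          have h5 := h ((S₁ ∩ S₂).erase a)
          have h6 : (S₁ ∪ S₂).card + (S₁ ∩ S₂).card = S₁.card + S₂.card :=
            Finset.card_union_add_card_inter S₁ S₂
          have h7 : ((S₁ ∩ S₂).erase a).card = (S₁ ∩ S₂).card - 1 :=
            Finset.card_erase_of_mem (Finset.mem_inter.mpr ⟨ha₁, ha₂⟩)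
          have h8 : 1 ≤ (S₁ ∩ S₂).card :=
            Finset.card_pos.mpr ⟨a, Finset.mem_inter.mpr ⟨ha₁, ha₂⟩⟩
          omega
        rcases hkey with hc | hc
        · obtain ⟨f, hf1, hf2, hf3⟩ := ih N₁ (hsum y₁ hy₁) hc
          refine ⟨f, hf1, ?_, hf3⟩
          intro b
          have := hf2 b
          by_cases hba : b = a
          · subst hba; rw [hN₁, Function.update_self] at this
            exact Finset.mem_of_mem_erase this
          · rwa [hN₁, Function.update_of_ne hba] at this
        · obtain ⟨f, hf1, hf2, hf3⟩ := ih N₂ (hsum y₂ hy₂) hc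
          refine ⟨f, hf1, ?_, hf3⟩
          intro b
          have := hf2 b
          by_cases hba : b = a
          · subst hba; rw [hN₂, Function.update_self] at this
            exact Finset.mem_of_mem_erase this
          · rwa [hN₂, Function.update_of_ne hba] at this
      · -- every N a is a singleton
        push_neg at hbig
        have hsingle : ∀ a : A, ∃ y, N a = {y} := by
          intro a
          have hle := hbig a
          have hge : 1 ≤ (N a).card := by
            have h1 := h {a}
            rw [Finset.singleton_biUnion] at h1
            simp only [Finset.card_singleton] at h1
            have := ρ.rk_le_card (N a)
            omega
          exact Finset.card_eq_one.mp (by omega)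
        choose f hf using hsingle
        have himg : ∀ S : Finset A, S.biUnion N = S.image f := by
          intro S
          ext z
          simp only [Finset.mem_biUnion, Finset.mem_image]
          constructor
          · rintro ⟨b, hb, hz⟩; rw [hf b, Finset.mem_singleton] at hz
            exact ⟨b, hb, hz.symm⟩
          · rintro ⟨b, hb, hz⟩; exact ⟨b, hb, by rw [hf b]; simp [hz]⟩
        have hcard : (Finset.univ.image f).card = Fintype.card A := by
          have h1 := h Finset.univ
          rw [himg] at h1
          have h2 := ρ.rk_le_card (Finset.univ.image f)
          have h3 := Finset.card_image_le (s := (Finset.univ : Finset A)) (f := f)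
          simp only [Finset.card_univ] at *
          omega
        refine ⟨f, ?_, fun a => by rw [hf a]; simp, ?_⟩
        · have hinj : Set.InjOn f (Finset.univ : Finset A) :=
            Finset.card_image_iff.mp (by rw [hcard, Finset.card_univ])
          intro x y hxy
          exact hinj (by simp) (by simp) hxy
        · have h1 := h Finset.univ
          rw [himg] at h1
          have h2 := ρ.rk_le_card (Finset.univ.image f)
          simp only [Finset.card_univ] at h1
          omega

lemma rado (ρ : FinMatroid B) (N : A → Finset B)
    (h : ∀ S : Finset A, S.card ≤ ρ.rk (S.biUnion N)) :
    ∃ f : A → B, Function.Injective f ∧ (∀ a, f a ∈ N a) ∧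
      ρ.rk (Finset.univ.image f) = Fintype.card A :=
  rado_aux ρ (∑ a, (N a).card) N le_rfl h

end Rado
section DirectSum
set_option linter.unusedSectionVars false
variable {α β : Type*} [Fintype α] [Fintype β]

lemma loopPart_mono {X Y : Finset (α ⊕ β)} (h : X ⊆ Y) : loopPart X ⊆ loopPart Y := by
  intro r hr
  simp only [loopPart, Finset.mem_filter, Finset.mem_univ, true_and] at hr ⊢
  exact h hr

lemma card_split (X : Finset (α ⊕ β)) :
    (X.filter (fun z => z.isLeft)).card + (loopPart X).card = X.card := by
  classical
  have h1 : X.filter (fun z => ¬ z.isLeft) = (loopPart X).image Sum.inr := by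
    ext z
    cases z with
    | inl a => simp [loopPart]
    | inr b => simp [loopPart]
  have h2 : (loopPart X).card = (X.filter (fun z => ¬ z.isLeft)).card := by
    rw [h1, Finset.card_image_of_injective _ Sum.inr_injective]
  rw [h2]
  exact Finset.card_filter_add_card_filter_not _

lemma loopPart_card_le (X : Finset (α ⊕ β)) : (loopPart X).card ≤ X.card := by
  have := card_split X; omega

lemma dsum_le_card (M : FinMatroid β) (X : Finset (α ⊕ β)) :
    X.card - (loopPart X).card + M.rk (loopPart X) ≤ X.card := by
  have h1 := M.rk_le_card (loopPart X)
  have h2 := loopPart_card_le X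
  omega

lemma dsum_mono (M : FinMatroid β) {X Y : Finset (α ⊕ β)} (h : X ⊆ Y) :
    X.card - (loopPart X).card + M.rk (loopPart X) ≤
      Y.card - (loopPart Y).card + M.rk (loopPart Y) := by
  classical
  have h1 := card_split X
  have h2 := card_split Y
  have h3 : (X.filter (fun z => z.isLeft)).card ≤ (Y.filter (fun z => z.isLeft)).card :=
    Finset.card_le_card (Finset.filter_subset_filter _ h)
  have h4 := M.rk_mono (loopPart_mono h)
  omega

section WithDec
variable [DecidableEq (α ⊕ β)]

lemma loopPart_union' (X Y : Finset (α ⊕ β)) :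
    loopPart (X ∪ Y) = loopPart X ∪ loopPart Y := by
  ext r; simp [loopPart]

lemma loopPart_inter' (X Y : Finset (α ⊕ β)) :
    loopPart (X ∩ Y) = loopPart X ∩ loopPart Y := by
  ext r; simp [loopPart]

lemma dsum_submod (M : FinMatroid β) (X Y : Finset (α ⊕ β)) :
    ((X ∪ Y).card - (loopPart (X ∪ Y)).card + M.rk (loopPart (X ∪ Y))) +
      ((X ∩ Y).card - (loopPart (X ∩ Y)).card + M.rk (loopPart (X ∩ Y))) ≤
    (X.card - (loopPart X).card + M.rk (loopPart X)) +
      (Y.card - (loopPart Y).card + M.rk (loopPart Y)) := by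
  classical
  have hu := loopPart_union' X Y
  have hi := loopPart_inter' X Y
  have c1 := card_split (X ∪ Y)
  have c2 := card_split (X ∩ Y)
  have c3 := card_split X
  have c4 := card_split Y
  have hf : ((X ∪ Y).filter (fun z : α ⊕ β => z.isLeft)).card
      + ((X ∩ Y).filter (fun z : α ⊕ β => z.isLeft)).card
      = (X.filter (fun z => z.isLeft)).card + (Y.filter (fun z => z.isLeft)).card := by
    rw [Finset.filter_union, Finset.filter_inter_distrib]
    exact Finset.card_union_add_card_inter _ _
  have hm := M.rk_submodular (loopPart X) (loopPart Y)
  rw [hu] at c1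
  rw [hi] at c2
  rw [hu, hi]
  omega

end WithDec

/-- Direct sum of the free matroid on `α` with a matroid on `β`. -/
noncomputable def FinMatroid.dsum (M : FinMatroid β) : FinMatroid (α ⊕ β) where
  rk X := X.card - (loopPart X).card + M.rk (loopPart X)
  rk_le_card X := by exact dsum_le_card M X
  rk_mono X Y h := by exact dsum_mono M h
  rk_submodular X Y := by exact @dsum_submod α β _ _ (fun a b => Classical.propDecidable (a = b)) M X Y

lemma FinMatroid.dsum_rk (M : FinMatroid β) (X : Finset (α ⊕ β)) :
    M.dsum.rk X = X.card - (loopPart X).card + M.rk (loopPart X) := rfl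

end DirectSum
/-- **Lemma (Rado-type matching criterion for `g_{k,0}`).**
Let `(G, R)` satisfy (C1) and (C3) with respect to a matroid `M` of rank `k`, and form
`G* = (V, E ∪ L)` and the bipartite graph `H₀` with the matroid `N⁻` on `V₀⁻` being the
direct sum of `M` on `L'` and the free matroid on the copies of `V`, and the free matroid
on `V₀⁺`.  Then `|F| ≤ g_{k,0}(F) = k|V(F)| + r_M(F ∩ L)` for every `F ⊆ E ∪ L` if and
only if `H₀` has an independent matching covering `V₀⁺`.  (An independent matching
covering `V₀⁺` is encoded as an injection `μ : V₀⁺ → V₀⁻` along the adjacency whose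
endpoints in `V₀⁻` form an independent set of `N⁻`, i.e. whose `L'`-part is independent
in `M`.) -/
theorem counting_iff_indep_matching_H0 {V E ι : Type*} [Fintype V] [Fintype E] [Fintype ι]
    (ends : E → Sym2 V) (root : ι → V) (M : FinMatroid ι) (k : ℕ)
    (hk : M.rk Finset.univ = k)
    (hC1 : CondC1 root M.rk) (hC3 : CondC3 V E ι k) :
    (∀ F : Finset (E ⊕ ι),
      F.card ≤ k * (incVertsStar ends root F).card + M.rk (loopPart F)) ↔
    (∃ μ : E ⊕ ι → (Fin k × V) ⊕ ι,
      Function.Injective μ ∧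
      (∀ x : E ⊕ ι, adjH0 ends root k x (μ x)) ∧
      M.Indep (Finset.univ.filter (fun r : ι => ∃ x, μ x = Sum.inr r))) := by
  classical
  set N : E ⊕ ι → Finset ((Fin k × V) ⊕ ι) :=
    fun x => Finset.univ.filter (fun z => adjH0 ends root k x z) with hN
  have hNmem : ∀ (x : E ⊕ ι) (z : (Fin k × V) ⊕ ι),
      z ∈ N x ↔ adjH0 ends root k x z := by
    intro x z; simp [hN]
  -- the loop part of N(F) is the loop part of F
  have hloopBi : ∀ F : Finset (E ⊕ ι), loopPart (F.biUnion N) = loopPart F := by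
    intro F
    ext r
    simp only [loopPart, Finset.mem_filter, Finset.mem_univ, true_and, Finset.mem_biUnion]
    constructor
    · rintro ⟨x, hx, hz⟩
      rw [hNmem] at hz
      cases x with
      | inl e => exact absurd hz (by simp [adjH0])
      | inr r' =>
          have : r = r' := hz
          rw [this]; exact hx
    · intro hr
      exact ⟨Sum.inr r, hr, (hNmem _ _).mpr rfl⟩
  -- the non-loop part of N(F) counts k copies of each vertex of V(F)
  have hleftBi : ∀ F : Finset (E ⊕ ι),
      ((F.biUnion N).filter (fun z => z.isLeft)).card
        = k * (incVertsStar ends root F).card := by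
    intro F
    have himg : (F.biUnion N).filter (fun z => z.isLeft)
        = ((Finset.univ : Finset (Fin k)) ×ˢ incVertsStar ends root F).image Sum.inl := by
      ext z
      cases z with
      | inl p =>
          obtain ⟨i, v⟩ := p
          simp only [Finset.mem_filter, Finset.mem_biUnion, Finset.mem_image,
            Finset.mem_product, Finset.mem_univ, true_and, Sum.isLeft_inl,
            and_true, incVertsStar]
          constructor
          · rintro ⟨x, hx, hz⟩
            rw [hNmem] at hz
            refine ⟨(i, v), ?_, rfl⟩
            simp only [Finset.mem_filter, Finset.mem_univ, true_and]
            refine ⟨x, hx, ?_⟩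
            cases x with
            | inl e => exact hz
            | inr r => exact hz
          · rintro ⟨⟨i', v'⟩, hv, hzz⟩
            injection hzz with h'
            rw [Prod.mk.injEq] at h'
            obtain ⟨rfl, rfl⟩ := h'
            obtain ⟨x, hx, hxx⟩ := hv
            refine ⟨x, hx, (hNmem _ _).mpr ?_⟩
            cases x with
            | inl e => exact hxx
            | inr r => exact hxx
      | inr r => simp
    rw [himg, Finset.card_image_of_injective _ Sum.inl_injective, Finset.card_product]
    simp
  have hcardBi : ∀ F : Finset (E ⊕ ι),
      (F.biUnion N).card = k * (incVertsStar ends root F).card + (loopPart F).card := by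
    intro F
    have h1 := card_split (F.biUnion N)
    rw [hleftBi F, hloopBi F] at h1
    omega
  have hrkBi : ∀ F : Finset (E ⊕ ι),
      M.dsum.rk (F.biUnion N) = k * (incVertsStar ends root F).card + M.rk (loopPart F) := by
    intro F
    rw [FinMatroid.dsum_rk, hloopBi F, hcardBi F]
    omega
  constructor
  · -- counting condition implies independent matching
    intro h
    obtain ⟨μ, hinj, hmemN, hrk⟩ := rado (M.dsum) N (fun S => by
      rw [hrkBi S]; exact h S)
    refine ⟨μ, hinj, fun x => (hNmem _ _).mp (hmemN x), ?_⟩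
    have h1 : Finset.univ.filter (fun r : ι => ∃ x, μ x = Sum.inr r)
        = loopPart (Finset.univ.image μ) := by
      ext r
      simp [loopPart, eq_comm]
    have h2 : (Finset.univ.image μ).card = Fintype.card (E ⊕ ι) := by
      rw [Finset.card_image_of_injective _ hinj, Finset.card_univ]
    rw [FinMatroid.dsum_rk] at hrk
    have h3 := M.rk_le_card (loopPart (Finset.univ.image μ))
    have h4 := loopPart_card_le (Finset.univ.image μ)
    unfold FinMatroid.Indep
    rw [h1]
    omega
  · -- independent matching implies counting condition
    rintro ⟨μ, hinj, hadj, hindep⟩ F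
    have h2 : F.card = (F.image μ).card :=
      (Finset.card_image_of_injective F hinj).symm
    have hsplit := card_split (F.image μ)
    have hsubL : (F.image μ).filter (fun z => z.isLeft)
        ⊆ (F.biUnion N).filter (fun z => z.isLeft) := by
      apply Finset.filter_subset_filter
      intro z hz
      obtain ⟨x, hx, rfl⟩ := Finset.mem_image.mp hz
      exact Finset.mem_biUnion.mpr ⟨x, hx, (hNmem _ _).mpr (hadj x)⟩
    have hL := Finset.card_le_card hsubL
    rw [hleftBi F] at hL
    have hsub2 : loopPart (F.image μ) ⊆ loopPart F := by
      intro r hr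
      simp only [loopPart, Finset.mem_filter, Finset.mem_univ, true_and,
        Finset.mem_image] at hr ⊢
      obtain ⟨x, hx, hxr⟩ := hr
      have hax := hadj x
      rw [hxr] at hax
      cases x with
      | inl e => exact absurd hax (by simp [adjH0])
      | inr r' =>
          have : r = r' := hax
          rw [this]; exact hx
    have hsub3 : loopPart (F.image μ)
        ⊆ Finset.univ.filter (fun r : ι => ∃ x, μ x = Sum.inr r) := by
      intro r hr
      simp only [loopPart, Finset.mem_filter, Finset.mem_univ, true_and,
        Finset.mem_image] at hr ⊢
      obtain ⟨x, _, hxr⟩ := hr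
      exact ⟨x, hxr⟩
    have hind := M.indep_subset' hindep hsub3
    unfold FinMatroid.Indep at hind
    have hmono := M.rk_mono hsub2
    omega
end
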